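/- Under the hypotheses of the invariance-under-twisting theorem (A ⊗_R B a twisted tensor product, A' a second algebra structure on A with the same unit, ρ : A' → A ⊗_R B an algebra map, λ : A → A ⊗ B with λ(1) = 1 ⊗ 1 satisfying λ(aa') = a_[0] * (a'_R)_[0] ⊗ (a'_R)_[1] (a_[1])_R, a_(0)[0] ⊗ a_(0)[1] a_(1) = a ⊗ 1, and a_[0](0) ⊗ a_[0](1) a_[1] = a ⊗ 1), the linear map A' ⊗_{R'} B → A ⊗_R B defined by a ⊗ b ↦ a_(0) ⊗ a_(1) b is an algebra isomorphism, where R'(b ⊗ a) = ((a_(0))_R)_[0] ⊗ ((a_(0))_R)_[1] b_R a_(1). -/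
import Mathlib


open TensorProduct LinearMap

noncomputable section
namespace IUT

variable {k : Type*} [Field k]

section Twisting
variable {A B : Type*} [AddCommGroup A] [Module k A] [AddCommGroup B] [Module k B]

/-- The twisted-tensor-product multiplication map on `A ⊗ B` determined by
multiplications `mA`, `mB` and a linear map `R : B ⊗ A →ₗ A ⊗ B`. -/
def mulOf (mA : A ⊗[k] A →ₗ[k] A) (mB : B ⊗[k] B →ₗ[k] B)
    (R : B ⊗[k] A →ₗ[k] A ⊗[k] B) :
    (A ⊗[k] B) ⊗[k] (A ⊗[k] B) →ₗ[k] A ⊗[k] B :=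
  TensorProduct.map mA mB
    ∘ₗ (TensorProduct.assoc k A A (B ⊗[k] B)).symm.toLinearMap
    ∘ₗ TensorProduct.map LinearMap.id
        ((TensorProduct.assoc k A B B).toLinearMap
          ∘ₗ TensorProduct.map R LinearMap.id
          ∘ₗ (TensorProduct.assoc k B A B).symm.toLinearMap)
    ∘ₗ (TensorProduct.assoc k A B (A ⊗[k] B)).toLinearMap

/-- The axioms of a twisting map, relative to multiplications `mA`, `mB`
with units `uA`, `uB`. -/
def IsTwistingMapMul (mA : A ⊗[k] A →ₗ[k] A) (uA : A)
    (mB : B ⊗[k] B →ₗ[k] B) (uB : B)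
    (R : B ⊗[k] A →ₗ[k] A ⊗[k] B) : Prop :=
  (∀ b : B, R (b ⊗ₜ[k] uA) = uA ⊗ₜ[k] b) ∧
  (∀ a : A, R (uB ⊗ₜ[k] a) = a ⊗ₜ[k] uB) ∧
  (R ∘ₗ TensorProduct.map LinearMap.id mA =
    TensorProduct.map mA LinearMap.id
      ∘ₗ (TensorProduct.assoc k A A B).symm.toLinearMap
      ∘ₗ TensorProduct.map LinearMap.id R
      ∘ₗ (TensorProduct.assoc k A B A).toLinearMap
      ∘ₗ TensorProduct.map R LinearMap.id
      ∘ₗ (TensorProduct.assoc k B A A).symm.toLinearMap) ∧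
  (R ∘ₗ TensorProduct.map mB LinearMap.id =
    TensorProduct.map LinearMap.id mB
      ∘ₗ (TensorProduct.assoc k A B B).toLinearMap
      ∘ₗ TensorProduct.map R LinearMap.id
      ∘ₗ (TensorProduct.assoc k B A B).symm.toLinearMap
      ∘ₗ TensorProduct.map LinearMap.id R
      ∘ₗ (TensorProduct.assoc k B B A).toLinearMap)

/-- The new twisting map `R'` of the invariance-under-twisting theorem:
`R'(b ⊗ a) = ((a₍₀₎)_R)_[0] ⊗ ((a₍₀₎)_R)_[1] · b_R · a₍₁₎`. -/
def twistPrime (mB : B ⊗[k] B →ₗ[k] B) (R : B ⊗[k] A →ₗ[k] A ⊗[k] B)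
    (ρ lam : A →ₗ[k] A ⊗[k] B) : B ⊗[k] A →ₗ[k] A ⊗[k] B :=
  TensorProduct.map LinearMap.id (mB ∘ₗ TensorProduct.map LinearMap.id mB)
    ∘ₗ (TensorProduct.assoc k A B (B ⊗[k] B)).toLinearMap
    ∘ₗ (TensorProduct.assoc k (A ⊗[k] B) B B).toLinearMap
    ∘ₗ TensorProduct.map (TensorProduct.map lam LinearMap.id) LinearMap.id
    ∘ₗ TensorProduct.map R LinearMap.id
    ∘ₗ (TensorProduct.assoc k B A B).symm.toLinearMap
    ∘ₗ TensorProduct.map LinearMap.id ρ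

/-- The right-hand side of condition (4.7):
`a ⊗ a' ↦ a_[0] * (a'_R)_[0] ⊗ (a'_R)_[1] (a_[1])_R`. -/
def lamMulMap (st : A ⊗[k] A →ₗ[k] A) (mB : B ⊗[k] B →ₗ[k] B)
    (R : B ⊗[k] A →ₗ[k] A ⊗[k] B) (lam : A →ₗ[k] A ⊗[k] B) :
    A ⊗[k] A →ₗ[k] A ⊗[k] B :=
  TensorProduct.map st mB
    ∘ₗ (TensorProduct.assoc k A A (B ⊗[k] B)).symm.toLinearMap
    ∘ₗ TensorProduct.map LinearMap.id (TensorProduct.assoc k A B B).toLinearMap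
    ∘ₗ TensorProduct.map LinearMap.id (TensorProduct.map lam LinearMap.id)
    ∘ₗ TensorProduct.map LinearMap.id R
    ∘ₗ (TensorProduct.assoc k A B A).toLinearMap
    ∘ₗ TensorProduct.map lam LinearMap.id

/-- `a ↦ a₍₀₎_[0] ⊗ a₍₀₎_[1] · a₍₁₎` : apply `g` to the first leg of `f` and
multiply the `B`-legs; used in conditions (4.8)/(4.9). -/
def sweedlerContract (mB : B ⊗[k] B →ₗ[k] B) (f g : A →ₗ[k] A ⊗[k] B) :
    A →ₗ[k] A ⊗[k] B :=
  TensorProduct.map LinearMap.id mB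
    ∘ₗ (TensorProduct.assoc k A B B).toLinearMap
    ∘ₗ TensorProduct.map g LinearMap.id
    ∘ₗ f

end Twisting

/-- The twisting-map axioms for two algebras with their ring multiplications. -/
def IsTwistingMap {A B : Type*} [Ring A] [Algebra k A] [Ring B] [Algebra k B]
    (R : B ⊗[k] A →ₗ[k] A ⊗[k] B) : Prop :=
  IsTwistingMapMul (LinearMap.mul' k A) (1 : A) (LinearMap.mul' k B) (1 : B) R


set_option maxHeartbeats 1000000
set_option synthInstance.maxHeartbeats 400000

section Aux
variable {A B : Type*} [AddCommGroup A] [Module k A] [Ring B] [Algebra k B]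

/-- right multiplication on the `B` leg -/
def rmul (b : B) : A ⊗[k] B →ₗ[k] A ⊗[k] B :=
  TensorProduct.map LinearMap.id (LinearMap.mulRight k b)

@[simp] lemma rmul_tmul (b : B) (p : A) (q : B) :
    rmul (k := k) b (p ⊗ₜ[k] q) = p ⊗ₜ[k] (q * b) := by
  simp [rmul]

lemma rmul_rmul (b c : B) (z : A ⊗[k] B) :
    rmul (k := k) c (rmul b z) = rmul (b * c) z := by
  induction z using TensorProduct.induction_on with
  | zero => simp
  | tmul p q => simp [mul_assoc]
  | add u v hu hv => simp [hu, hv]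

lemma phi_assoc (t : A ⊗[k] B) (v : B) :
    (TensorProduct.map LinearMap.id (LinearMap.mul' k B))
      ((TensorProduct.assoc k A B B) (t ⊗ₜ[k] v)) = rmul v t := by
  induction t using TensorProduct.induction_on with
  | zero => simp
  | tmul p q => simp [mul'_apply]
  | add u w hu hw => simp only [add_tmul, map_add, hu, hw]

lemma phi_assoc2 (t : A ⊗[k] B) (y q : B) :
    (TensorProduct.map LinearMap.id
        ((LinearMap.mul' k B) ∘ₗ TensorProduct.map LinearMap.id (LinearMap.mul' k B)))
      ((TensorProduct.assoc k A B (B ⊗[k] B)) (t ⊗ₜ[k] (y ⊗ₜ[k] q))) = rmul (y * q) t := by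
  induction t using TensorProduct.induction_on with
  | zero => simp
  | tmul p c => simp [mul'_apply, mul_assoc]
  | add u w hu hw => simp only [add_tmul, map_add, hu, hw]

/-- `T` / `S`-type maps on pure tensors. -/
lemma TS_apply (f : A →ₗ[k] A ⊗[k] B) (a : A) (b : B) :
    TensorProduct.map LinearMap.id (LinearMap.mul' k B)
      ((TensorProduct.assoc k A B B)
        (TensorProduct.map f LinearMap.id (a ⊗ₜ[k] b))) = rmul b (f a) := by
  simp only [map_tmul, id_coe, id_eq]
  exact phi_assoc (f a) b

lemma TS_rmul (f : A →ₗ[k] A ⊗[k] B) (b : B) (z : A ⊗[k] B) :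
    TensorProduct.map LinearMap.id (LinearMap.mul' k B)
      ((TensorProduct.assoc k A B B)
        (TensorProduct.map f LinearMap.id (rmul b z)))
    = rmul b (TensorProduct.map LinearMap.id (LinearMap.mul' k B)
        ((TensorProduct.assoc k A B B)
          (TensorProduct.map f LinearMap.id z))) := by
  induction z using TensorProduct.induction_on with
  | zero => simp
  | tmul p q => rw [rmul_tmul, TS_apply, TS_apply, rmul_rmul]
  | add u w hu hw => simp only [map_add, hu, hw]

lemma map_rmul (g : A →ₗ[k] A) (c e : B) (t : A ⊗[k] B) :
    TensorProduct.map g (LinearMap.mulRight k c) (rmul e t)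
      = TensorProduct.map g (LinearMap.mulRight k (e * c)) t := by
  induction t using TensorProduct.induction_on with
  | zero => simp
  | tmul p q => simp [mul_assoc]
  | add u w hu hw => simp only [map_add, hu, hw]

/-- `mulOf` on pure tensors, with the value of `R₀` left opaque. -/
lemma mulOf_tmul (m : A ⊗[k] A →ₗ[k] A) (R₀ : B ⊗[k] A →ₗ[k] A ⊗[k] B)
    (a a' : A) (b b' : B) :
    mulOf m (LinearMap.mul' k B) R₀ ((a ⊗ₜ[k] b) ⊗ₜ[k] (a' ⊗ₜ[k] b')) =
      TensorProduct.map (m ∘ₗ TensorProduct.mk k A A a) (LinearMap.mulRight k b')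
        (R₀ (b ⊗ₜ[k] a')) := by
  unfold mulOf
  simp only [coe_comp, Function.comp_apply, LinearEquiv.coe_coe, assoc_tmul,
    assoc_symm_tmul, map_tmul, id_coe, id_eq]
  generalize R₀ (b ⊗ₜ[k] a') = w
  induction w using TensorProduct.induction_on with
  | zero => simp
  | tmul x y => simp [mul'_apply, mk_apply]
  | add u v hu hv => simp only [add_tmul, tmul_add, map_add, hu, hv]

/-- Compatibility of the twisted product with right multiplication on the
second factor's `B` leg. -/
lemma mulOf_rmul (m : A ⊗[k] A →ₗ[k] A) (R₀ : B ⊗[k] A →ₗ[k] A ⊗[k] B)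
    (z w : A ⊗[k] B) (c : B) :
    mulOf m (LinearMap.mul' k B) R₀ (z ⊗ₜ[k] rmul c w) =
      rmul c (mulOf m (LinearMap.mul' k B) R₀ (z ⊗ₜ[k] w)) := by
  induction z using TensorProduct.induction_on with
  | zero => simp
  | tmul s t =>
    induction w using TensorProduct.induction_on with
    | zero => simp
    | tmul p q =>
      rw [rmul_tmul, mulOf_tmul, mulOf_tmul]
      generalize R₀ (t ⊗ₜ[k] p) = v
      induction v using TensorProduct.induction_on with
      | zero => simp
      | tmul x y => simp [mul_assoc]
      | add u v hu hv => simp only [map_add, hu, hv]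
    | add u v hu hv => simp only [map_add, tmul_add, hu, hv]
  | add u v hu hv => simp only [map_add, add_tmul, hu, hv]

end Aux
section Key
variable {A B : Type*} [Ring A] [Algebra k A] [Ring B] [Algebra k B]

/-- Key computation using the fourth twisting-map axiom:
`μ(z·(1⊗b) ⊗ z'·(1⊗b')) = μ(z ⊗ ((1⊗b)·z')·(1⊗b'))`. -/
lemma keyE (R : B ⊗[k] A →ₗ[k] A ⊗[k] B)
    (h4 : R ∘ₗ TensorProduct.map (LinearMap.mul' k B) LinearMap.id =
      TensorProduct.map LinearMap.id (LinearMap.mul' k B)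
        ∘ₗ (TensorProduct.assoc k A B B).toLinearMap
        ∘ₗ TensorProduct.map R LinearMap.id
        ∘ₗ (TensorProduct.assoc k B A B).symm.toLinearMap
        ∘ₗ TensorProduct.map LinearMap.id R
        ∘ₗ (TensorProduct.assoc k B B A).toLinearMap)
    (z z' : A ⊗[k] B) (b b' : B) :
    mulOf (LinearMap.mul' k A) (LinearMap.mul' k B) R (rmul b z ⊗ₜ[k] rmul b' z') =
      mulOf (LinearMap.mul' k A) (LinearMap.mul' k B) R
        (z ⊗ₜ[k] rmul b' (mulOf (LinearMap.mul' k A) (LinearMap.mul' k B) R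
          (((1 : A) ⊗ₜ[k] b) ⊗ₜ[k] z'))) := by
  induction z using TensorProduct.induction_on with
  | zero => simp
  | tmul a₀ β =>
    induction z' using TensorProduct.induction_on with
    | zero => simp
    | tmul p q =>
      rw [rmul_tmul, rmul_tmul, mulOf_tmul, mulOf_tmul]
      have h4' := LinearMap.congr_fun h4 ((β ⊗ₜ[k] b) ⊗ₜ[k] p)
      simp only [coe_comp, Function.comp_apply, map_tmul, mul'_apply, id_coe, id_eq,
        LinearEquiv.coe_coe, assoc_tmul] at h4'
      rw [h4']
      generalize R (b ⊗ₜ[k] p) = w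
      induction w using TensorProduct.induction_on with
      | zero => simp
      | tmul x y =>
        simp only [map_tmul, mul'_apply, mk_apply, id_coe, id_eq, one_mul,
          LinearEquiv.coe_coe, assoc_symm_tmul]
        rw [phi_assoc, map_rmul]
        simp only [coe_comp, Function.comp_apply, mk_apply, mul'_apply, one_mul,
          mulRight_apply, mul_assoc]
        rw [rmul_tmul, mulOf_tmul, mul_assoc]
      | add u v hu hv =>
        simp only [map_add, tmul_add, add_tmul, hu, hv]
    | add u v hu hv => simp only [map_add, tmul_add, hu, hv]
  | add u v hu hv => simp only [map_add, add_tmul, hu, hv]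

/-- Key computation using (4.9) and multiplicativity of `ρ`. -/
lemma keyA (R : B ⊗[k] A →ₗ[k] A ⊗[k] B) (st : A →ₗ[k] A →ₗ[k] A)
    (ρ lam : A →ₗ[k] A ⊗[k] B)
    (hρ_mul : ∀ a a' : A, ρ (st a a') =
      mulOf (LinearMap.mul' k A) (LinearMap.mul' k B) R (ρ a ⊗ₜ[k] ρ a'))
    (h49 : ∀ a : A, sweedlerContract (LinearMap.mul' k B) lam ρ a = a ⊗ₜ[k] (1 : B))
    (a x : A) (d : B) :
    TensorProduct.map LinearMap.id (LinearMap.mul' k B)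
      ((TensorProduct.assoc k A B B)
        (TensorProduct.map ρ LinearMap.id
          (TensorProduct.map (st a) (LinearMap.mulRight k d) (lam x)))) =
    mulOf (LinearMap.mul' k A) (LinearMap.mul' k B) R (ρ a ⊗ₜ[k] (x ⊗ₜ[k] d)) := by
  have key : ∀ t : A ⊗[k] B,
      TensorProduct.map LinearMap.id (LinearMap.mul' k B)
        ((TensorProduct.assoc k A B B)
          (TensorProduct.map ρ LinearMap.id
            (TensorProduct.map (st a) (LinearMap.mulRight k d) t))) =
      rmul d (mulOf (LinearMap.mul' k A) (LinearMap.mul' k B) R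
        (ρ a ⊗ₜ[k] (TensorProduct.map LinearMap.id (LinearMap.mul' k B)
          ((TensorProduct.assoc k A B B)
            (TensorProduct.map ρ LinearMap.id t))))) := by
    intro t
    induction t using TensorProduct.induction_on with
    | zero => simp
    | tmul u v =>
      rw [map_tmul, mulRight_apply, TS_apply, TS_apply, hρ_mul, mulOf_rmul, rmul_rmul]
    | add u w hu hw => simp only [map_add, tmul_add, hu, hw]
  rw [key (lam x)]
  have hsw : TensorProduct.map LinearMap.id (LinearMap.mul' k B)
      ((TensorProduct.assoc k A B B)
        (TensorProduct.map ρ LinearMap.id (lam x))) =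
      sweedlerContract (LinearMap.mul' k B) lam ρ x := rfl
  rw [hsw, h49]
  have hx : (x ⊗ₜ[k] d : A ⊗[k] B) = rmul d (x ⊗ₜ[k] (1 : B)) := by simp
  rw [hx, mulOf_rmul]

/-- Key computation: `T ((a ⊗ 1) ·' R'(b ⊗ a') · (1 ⊗ c)) = ρ(a)·(((1⊗b)·ρ(a'))·(1⊗c))`. -/
lemma keyD (R : B ⊗[k] A →ₗ[k] A ⊗[k] B) (st : A →ₗ[k] A →ₗ[k] A)
    (ρ lam : A →ₗ[k] A ⊗[k] B)
    (hρ_mul : ∀ a a' : A, ρ (st a a') =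
      mulOf (LinearMap.mul' k A) (LinearMap.mul' k B) R (ρ a ⊗ₜ[k] ρ a'))
    (h49 : ∀ a : A, sweedlerContract (LinearMap.mul' k B) lam ρ a = a ⊗ₜ[k] (1 : B))
    (a a' : A) (b c : B) :
    TensorProduct.map LinearMap.id (LinearMap.mul' k B)
      ((TensorProduct.assoc k A B B)
        (TensorProduct.map ρ LinearMap.id
          (TensorProduct.map (st a) (LinearMap.mulRight k c)
            (twistPrime (LinearMap.mul' k B) R ρ lam (b ⊗ₜ[k] a'))))) =
    mulOf (LinearMap.mul' k A) (LinearMap.mul' k B) R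
      (ρ a ⊗ₜ[k] rmul c (mulOf (LinearMap.mul' k A) (LinearMap.mul' k B) R
        (((1 : A) ⊗ₜ[k] b) ⊗ₜ[k] ρ a'))) := by
  unfold twistPrime
  simp only [coe_comp, Function.comp_apply, map_tmul, id_coe, id_eq, LinearEquiv.coe_coe]
  generalize ρ a' = z
  induction z using TensorProduct.induction_on with
  | zero => simp
  | tmul p q =>
    rw [mulOf_tmul]
    simp only [assoc_symm_tmul, map_tmul, id_coe, id_eq]
    generalize R (b ⊗ₜ[k] p) = w
    induction w using TensorProduct.induction_on with
    | zero => simp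
    | tmul x y =>
      simp only [map_tmul, assoc_tmul, id_coe, id_eq, mul'_apply, mk_apply, one_mul,
        coe_comp, Function.comp_apply, mulRight_apply, rmul_tmul]
      rw [phi_assoc2, map_rmul, keyA R st ρ lam hρ_mul h49]
    | add u v hu hv =>
      simp only [map_add, add_tmul, tmul_add, hu, hv]
  | add u v hu hv =>
    simp only [map_add, add_tmul, tmul_add, hu, hv]

end Key
/-- invariance under twisting, second part. Under the
hypotheses of the invariance-under-twisting theorem, the map
`a ⊗ b ↦ a₍₀₎ ⊗ a₍₁₎ b : A' ⊗_{R'} B → A ⊗_R B` is an algebra isomorphism. -/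
theorem twistPrime_algebra_iso
    {A B : Type*} [Ring A] [Algebra k A] [Ring B] [Algebra k B]
    (R : B ⊗[k] A →ₗ[k] A ⊗[k] B) (hR : IsTwistingMap R)
    (st : A →ₗ[k] A →ₗ[k] A)
    (hst_one : ∀ a : A, st 1 a = a) (hst_one' : ∀ a : A, st a 1 = a)
    (hst_assoc : ∀ a b c : A, st (st a b) c = st a (st b c))
    (ρ lam : A →ₗ[k] A ⊗[k] B)
    (hρ_one : ρ 1 = (1 : A) ⊗ₜ[k] (1 : B))
    (hρ_mul : ∀ a a' : A, ρ (st a a') =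
      mulOf (LinearMap.mul' k A) (LinearMap.mul' k B) R (ρ a ⊗ₜ[k] ρ a'))
    (hlam_one : lam 1 = (1 : A) ⊗ₜ[k] (1 : B))
    (h47 : ∀ a a' : A, lam (a * a') =
      lamMulMap (TensorProduct.lift st) (LinearMap.mul' k B) R lam (a ⊗ₜ[k] a'))
    (h48 : ∀ a : A, sweedlerContract (LinearMap.mul' k B) ρ lam a = a ⊗ₜ[k] (1 : B))
    (h49 : ∀ a : A, sweedlerContract (LinearMap.mul' k B) lam ρ a = a ⊗ₜ[k] (1 : B))
    -- the map `T : a ⊗ b ↦ a₍₀₎ ⊗ a₍₁₎ b`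
    (T : A ⊗[k] B →ₗ[k] A ⊗[k] B)
    (hT : T = TensorProduct.map LinearMap.id (LinearMap.mul' k B)
        ∘ₗ (TensorProduct.assoc k A B B).toLinearMap
        ∘ₗ TensorProduct.map ρ LinearMap.id) :
    Function.Bijective T ∧
    T ((1 : A) ⊗ₜ[k] (1 : B)) = (1 : A) ⊗ₜ[k] (1 : B) ∧
    (∀ x y : A ⊗[k] B,
      T (mulOf (TensorProduct.lift st) (LinearMap.mul' k B)
          (twistPrime (LinearMap.mul' k B) R ρ lam) (x ⊗ₜ[k] y)) =
      mulOf (LinearMap.mul' k A) (LinearMap.mul' k B) R (T x ⊗ₜ[k] T y)) := by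

  subst hT
  obtain ⟨h1, h2, h3, h4⟩ := hR
  have hST : Function.LeftInverse
      ⇑(TensorProduct.map LinearMap.id (LinearMap.mul' k B)
        ∘ₗ (TensorProduct.assoc k A B B).toLinearMap
        ∘ₗ TensorProduct.map lam LinearMap.id)
      ⇑(TensorProduct.map LinearMap.id (LinearMap.mul' k B)
        ∘ₗ (TensorProduct.assoc k A B B).toLinearMap
        ∘ₗ TensorProduct.map ρ LinearMap.id) := by
    intro x
    induction x using TensorProduct.induction_on with
    | zero => simp
    | tmul a b =>
      simp only [coe_comp, Function.comp_apply, LinearEquiv.coe_coe]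
      rw [TS_apply, TS_rmul]
      have hsw : TensorProduct.map LinearMap.id (LinearMap.mul' k B)
          ((TensorProduct.assoc k A B B)
            (TensorProduct.map lam LinearMap.id (ρ a))) =
          sweedlerContract (LinearMap.mul' k B) ρ lam a := rfl
      rw [hsw, h48, rmul_tmul, one_mul]
    | add u v hu hv => simp only [map_add, hu, hv]
  have hTS : Function.RightInverse
      ⇑(TensorProduct.map LinearMap.id (LinearMap.mul' k B)
        ∘ₗ (TensorProduct.assoc k A B B).toLinearMap
        ∘ₗ TensorProduct.map lam LinearMap.id)
      ⇑(TensorProduct.map LinearMap.id (LinearMap.mul' k B)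
        ∘ₗ (TensorProduct.assoc k A B B).toLinearMap
        ∘ₗ TensorProduct.map ρ LinearMap.id) := by
    intro x
    induction x using TensorProduct.induction_on with
    | zero => simp
    | tmul a b =>
      simp only [coe_comp, Function.comp_apply, LinearEquiv.coe_coe]
      rw [TS_apply, TS_rmul]
      have hsw : TensorProduct.map LinearMap.id (LinearMap.mul' k B)
          ((TensorProduct.assoc k A B B)
            (TensorProduct.map ρ LinearMap.id (lam a))) =
          sweedlerContract (LinearMap.mul' k B) lam ρ a := rfl
      rw [hsw, h49, rmul_tmul, one_mul]
    | add u v hu hv => simp only [map_add, hu, hv]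
  refine ⟨⟨hST.injective, hTS.surjective⟩, ?_, ?_⟩
  · simp only [coe_comp, Function.comp_apply, LinearEquiv.coe_coe]
    rw [TS_apply, hρ_one, rmul_tmul, one_mul]
  · have hmk : ∀ a : A, TensorProduct.lift st ∘ₗ TensorProduct.mk k A A a = st a :=
      fun a => LinearMap.ext fun p => by simp
    intro x y
    induction x using TensorProduct.induction_on with
    | zero => simp
    | tmul a b =>
      induction y using TensorProduct.induction_on with
      | zero => simp
      | tmul a' b' =>
        simp only [coe_comp, Function.comp_apply, LinearEquiv.coe_coe]
        rw [mulOf_tmul (TensorProduct.lift st), hmk, keyD R st ρ lam hρ_mul h49,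
          TS_apply, TS_apply, keyE R h4]
      | add u v hu hv => simp only [map_add, tmul_add, hu, hv]
    | add u v hu hv => simp only [map_add, add_tmul, hu, hv]


end IUT
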